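/- The polynomials X(x,u) = x² + u² and Y(x,u) = x³ − 3xu² are algebraically independent over ℝ: no nonzero polynomial P(X,Y) in two variables vanishes identically when X and Y are substituted. -/
import Mathlib


/-- The polynomial `X = x² + u²`. -/
noncomputable def polyX : MvPolynomial (Fin 2) ℝ :=
  MvPolynomial.X 0 ^ 2 + MvPolynomial.X 1 ^ 2

/-- The polynomial `Y = x³ − 3xu²`. -/
noncomputable def polyY : MvPolynomial (Fin 2) ℝ :=
  MvPolynomial.X 0 ^ 3 - 3 * MvPolynomial.X 0 * MvPolynomial.X 1 ^ 2

open MvPolynomial Set in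
lemma one_var_zero (q : MvPolynomial (Fin 1) ℝ)
    (h : ∀ b ∈ Set.Ioo (-1 : ℝ) 1, MvPolynomial.eval ![b] q = 0) : q = 0 := by
  have h1 : Function.Injective (MvPolynomial.aeval (R := ℝ) (Fin.elim0 : Fin 0 → ℝ)) :=
    MvPolynomial.aeval_injective_iff_of_isEmpty.mpr (fun x y hxy => by simpa using hxy)
  have h2 : ∀ p : MvPolynomial (Fin 0) ℝ,
      MvPolynomial.aeval (R := ℝ) (Fin.elim0 : Fin 0 → ℝ) p = MvPolynomial.eval Fin.elim0 p :=
    fun p => RingHom.congr_fun (MvPolynomial.coe_aeval_eq_eval (Fin.elim0 : Fin 0 → ℝ)) p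
  have hinj : Function.Injective (MvPolynomial.eval (Fin.elim0 : Fin 0 → ℝ)) := by
    intro p q hpq
    apply h1
    rw [h2, h2]; exact hpq
  have key : Polynomial.map (MvPolynomial.eval (Fin.elim0 : Fin 0 → ℝ))
      ((MvPolynomial.finSuccEquiv ℝ 0) q) = 0 := by
    apply Polynomial.eq_zero_of_infinite_isRoot
    apply Set.Infinite.mono (s := Set.Ioo (-1 : ℝ) 1)
    · intro b hb
      have hb' := h b hb
      rw [show (![b] : Fin 1 → ℝ) = Fin.cons b Fin.elim0 by
        funext i; fin_cases i <;> rfl] at hb'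
      rw [MvPolynomial.eval_eq_eval_mv_eval'] at hb'
      exact hb'
    · exact Set.Ioo_infinite (by norm_num)
  have h0 : Polynomial.map (MvPolynomial.eval (Fin.elim0 : Fin 0 → ℝ))
      ((MvPolynomial.finSuccEquiv ℝ 0) q)
      = Polynomial.map (MvPolynomial.eval (Fin.elim0 : Fin 0 → ℝ)) 0 := by
    simpa using key
  have := Polynomial.map_injective _ hinj h0
  exact (MvPolynomial.finSuccEquiv ℝ 0).injective (by rw [map_zero]; exact this)

open MvPolynomial Set in
lemma two_var_zero (P : MvPolynomial (Fin 2) ℝ)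
    (h : ∀ a ∈ Set.Ioi (1 : ℝ), ∀ b ∈ Set.Ioo (-1 : ℝ) 1,
      MvPolynomial.eval ![a, b] P = 0) : P = 0 := by
  set Q := MvPolynomial.finSuccEquiv ℝ 1 P with hQ
  have key : ∀ b ∈ Set.Ioo (-1 : ℝ) 1,
      Polynomial.map (MvPolynomial.eval ![b]) Q = 0 := by
    intro b hb
    apply Polynomial.eq_zero_of_infinite_isRoot
    apply Set.Infinite.mono (s := Set.Ioi (1 : ℝ))
    · intro a ha
      have ha' := h a ha b hb
      rw [show (![a, b] : Fin 2 → ℝ) = Fin.cons a ![b] by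
        funext i; fin_cases i <;> rfl] at ha'
      rw [MvPolynomial.eval_eq_eval_mv_eval'] at ha'
      exact ha'
    · exact Set.Ioi_infinite 1
  have hc : ∀ n, Q.coeff n = 0 := by
    intro n
    apply one_var_zero
    intro b hb
    have h1 := congrArg (fun p => Polynomial.coeff p n) (key b hb)
    simpa using h1
  have hQ0 : Q = 0 := Polynomial.ext fun n => by simp [hc n]
  exact (MvPolynomial.finSuccEquiv ℝ 1).injective (by rw [map_zero, ← hQ]; exact hQ0)

theorem stmt_13 (P : MvPolynomial (Fin 2) ℝ)
    (hP : MvPolynomial.aeval ![polyX, polyY] P = 0) : P = 0 := by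
  apply two_var_zero
  intro a ha b hb
  -- choose x, u with x² + u² = a and x³ − 3xu² = b
  have ha0 : (0 : ℝ) < a := lt_trans one_pos ha
  have hsa : Real.sqrt a ^ 2 = a := Real.sq_sqrt ha0.le
  have hsa1 : 1 ≤ Real.sqrt a := by
    rw [show (1:ℝ) = Real.sqrt 1 by simp]
    exact Real.sqrt_le_sqrt (le_of_lt ha)
  have hsapos : 0 < Real.sqrt a := lt_of_lt_of_le one_pos hsa1
  set c : ℝ := b / Real.sqrt a ^ 3 with hc
  have hc1 : |c| ≤ 1 := by
    have hd : (0:ℝ) < Real.sqrt a ^ 3 := by positivity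
    rw [hc, abs_div, abs_of_pos hd, div_le_one hd]
    have hb1 : |b| ≤ 1 := le_of_lt (abs_lt.mpr ⟨hb.1, hb.2⟩)
    exact hb1.trans (one_le_pow₀ hsa1)
  set θ : ℝ := Real.arccos c / 3 with hθ
  have hcos3 : Real.cos (3 * θ) = c := by
    rw [hθ, mul_div_cancel₀ _ (by norm_num : (3:ℝ) ≠ 0)]
    exact Real.cos_arccos (neg_le_of_abs_le hc1) (le_of_abs_le hc1)
  set x : ℝ := Real.sqrt a * Real.cos θ with hx
  set u : ℝ := Real.sqrt a * Real.sin θ with hu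
  have hXval : x ^ 2 + u ^ 2 = a := by
    have hpyth := Real.sin_sq_add_cos_sq θ
    rw [hx, hu]
    nlinarith [hpyth, hsa]
  have hYval : x ^ 3 - 3 * x * u ^ 2 = b := by
    have h3 : Real.cos (3 * θ) = 4 * Real.cos θ ^ 3 - 3 * Real.cos θ :=
      Real.cos_three_mul θ
    have hs : Real.sin θ ^ 2 = 1 - Real.cos θ ^ 2 := by
      nlinarith [Real.sin_sq_add_cos_sq θ]
    have heq : x ^ 3 - 3 * x * u ^ 2 = Real.sqrt a ^ 3 * Real.cos (3 * θ) := by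
      rw [hx, hu, h3]
      linear_combination (-3 * Real.sqrt a ^ 3 * Real.cos θ) * hs
    rw [heq, hcos3, hc]
    field_simp
  -- evaluate hP at (x, u)
  have h2 : MvPolynomial.aeval (fun i => MvPolynomial.aeval ![x, u] (![polyX, polyY] i)) P
      = 0 := by
    rw [← MvPolynomial.comp_aeval_apply, hP, map_zero]
  have h3 : (fun i => MvPolynomial.aeval ![x, u] (![polyX, polyY] i)) = ![a, b] := by
    funext i
    fin_cases i
    · simp [polyX]
      linear_combination hXval
    · simp [polyY]
      linear_combination hYval
  rw [h3] at h2
  have h4 : MvPolynomial.eval ![a, b] P = MvPolynomial.aeval ![a, b] P :=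
    (RingHom.congr_fun (MvPolynomial.coe_aeval_eq_eval ![a, b]) P).symm
  rw [h4]
  exact h2
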